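/- Let V be an irreducible weight module for τ with finite-dimensional weight spaces, and let z be a homogeneous central element of degree m acting nonzero on V. Then there exists a central (τ-equivariant) operator T on V with zT = Tz = Id; i.e., z acts as an invertible operator on V. -/

import Mathlib

noncomputable section

/-- Abstract presentation of the toroidal Lie algebra
`τ = G ⊗ ℂ[t₁^{±1},…,t_n^{±1}] ⊕ Z ⊕ D`:
a Lie algebra `τ` equipped with generators `X(r)g = g ⊗ t^r`, `K m i = t^m Kᵢ`
and degree derivations `dᵢ`, subject to the toroidal bracket relations. -/
structure ToroidalAlg (n : ℕ) (G : Type*) [LieRing G] [LieAlgebra ℂ G]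
    (B : G →ₗ[ℂ] G →ₗ[ℂ] ℂ) (τ : Type*) [LieRing τ] [LieAlgebra ℂ τ] where
  X : (Fin n → ℤ) → G →ₗ[ℂ] τ
  K : (Fin n → ℤ) → Fin n → τ
  d : Fin n → τ
  K_rel : ∀ m : Fin n → ℤ, ∑ i : Fin n, (m i : ℂ) • K m i = 0
  bracket_XX : ∀ (r s : Fin n → ℤ) (g h : G),
    ⁅X r g, X s h⁆ = X (r + s) ⁅g, h⁆ + B g h • ∑ i : Fin n, (r i : ℂ) • K (r + s) i
  K_central : ∀ (m : Fin n → ℤ) (i : Fin n) (y : τ), ⁅K m i, y⁆ = 0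
  bracket_dX : ∀ (i : Fin n) (r : Fin n → ℤ) (g : G), ⁅d i, X r g⁆ = (r i : ℂ) • X r g
  bracket_dK : ∀ (i : Fin n) (m : Fin n → ℤ) (j : Fin n), ⁅d i, K m j⁆ = (m i : ℂ) • K m j
  bracket_dd : ∀ i j : Fin n, ⁅d i, d j⁆ = 0
  spanning : Submodule.span ℂ
      ((⋃ r : Fin n → ℤ, Set.range (X r)) ∪
        (⋃ m : Fin n → ℤ, Set.range (K m)) ∪ Set.range d) = ⊤



variable {n : ℕ} {G : Type*} [LieRing G] [LieAlgebra ℂ G]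
  {B : G →ₗ[ℂ] G →ₗ[ℂ] ℂ}
  {τ : Type*} [LieRing τ] [LieAlgebra ℂ τ]

/-- The Cartan subalgebra `h̃ = h ⊕ ⟨K₁,…,K_n⟩ ⊕ ⟨d₁,…,d_n⟩` of `τ`, as a set. -/
def ToroidalAlg.cartanSet (T : ToroidalAlg n G B τ) (hG : LieSubalgebra ℂ G) : Set τ :=
  ((fun g => T.X 0 g) '' (hG : Set G)) ∪ (Set.range fun i => T.K 0 i) ∪ Set.range T.d

/-- The weight space of a `τ`-module `V` for a weight `χ : τ → ℂ` with respect to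
the Cartan subalgebra `h̃`. -/
def ToroidalAlg.wtSp (T : ToroidalAlg n G B τ) (hG : LieSubalgebra ℂ G)
    (V : Type*) [AddCommGroup V] [Module ℂ V] [LieRingModule τ V] [LieModule ℂ τ V]
    (χ : τ → ℂ) : Submodule ℂ V :=
  ⨅ x ∈ T.cartanSet hG, Module.End.eigenspace (LieModule.toEnd ℂ τ V x) (χ x)

/-- **Lemma 1.7(2).** Let `V` be an irreducible weight module for `τ`
with finite-dimensional weight spaces, and let `z ∈ Z` be homogeneous of degree `m`
and act nonzero on `V`.  Then there is a central (equivariant) operator `T` on `V`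
with `zT = Tz = Id`; i.e. `z` acts invertibly on `V`. -/
theorem central_homogeneous_invertible
    [FiniteDimensional ℂ G] [LieAlgebra.IsSimple ℂ G]
    (T : ToroidalAlg n G B τ)
    (hG : LieSubalgebra ℂ G) [hG.IsCartanSubalgebra]
    {V : Type*} [AddCommGroup V] [Module ℂ V] [LieRingModule τ V] [LieModule ℂ τ V]
    [LieModule.IsIrreducible ℂ τ V]
    (hwt : (⨆ χ : τ → ℂ, T.wtSp hG V χ) = ⊤)
    (hfd : ∀ χ : τ → ℂ, FiniteDimensional ℂ (T.wtSp hG V χ))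
    (z : τ) (m : Fin n → ℤ)
    (hzZ : z ∈ Submodule.span ℂ (⋃ r : Fin n → ℤ, Set.range (T.K r)))
    (hdeg : ∀ i : Fin n, ⁅T.d i, z⁆ = (m i : ℂ) • z)
    (hnz : ∃ v : V, ⁅z, v⁆ ≠ 0) :
    ∃ Top : Module.End ℂ V,
      (∀ (r : Fin n → ℤ) (g : G) (v : V), Top ⁅T.X r g, v⁆ = ⁅T.X r g, Top v⁆) ∧
      (∀ (r : Fin n → ℤ) (i : Fin n) (v : V), Top ⁅T.K r i, v⁆ = ⁅T.K r i, Top v⁆) ∧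
      (∀ v : V, Top ⁅z, v⁆ = v ∧ ⁅z, Top v⁆ = v) := by
  -- z is central in τ
  have hcent : ∀ y : τ, ⁅z, y⁆ = 0 := by
    have key : ∀ w ∈ Submodule.span ℂ (⋃ r : Fin n → ℤ, Set.range (T.K r)),
        ∀ y : τ, ⁅w, y⁆ = 0 := by
      intro w hw
      induction hw using Submodule.span_induction with
      | mem x hx =>
        obtain ⟨_, ⟨r, rfl⟩, hx⟩ := hx
        obtain ⟨i, rfl⟩ := hx
        exact T.K_central r i
      | zero => simp
      | add a b _ _ ha hb => intro y; rw [add_lie, ha, hb, add_zero]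
      | smul c a _ ha => intro y; rw [smul_lie, ha, smul_zero]
    exact key z hzZ
  -- the action of z commutes with the action of every x : τ
  have hcomm : ∀ (x : τ) (v : V), ⁅z, ⁅x, v⁆⁆ = ⁅x, ⁅z, v⁆⁆ := by
    intro x v
    rw [leibniz_lie, hcent x, zero_lie, zero_add]
  set φ : Module.End ℂ V := LieModule.toEnd ℂ τ V z with hφ
  have hφ_apply : ∀ v : V, φ v = ⁅z, v⁆ := fun v => rfl
  have hφ_ne : φ ≠ 0 := by
    obtain ⟨v, hv⟩ := hnz
    intro h
    exact hv (by rw [← hφ_apply, h]; rfl)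
  -- kernel and range as Lie submodules
  let Kker : LieSubmodule ℂ τ V :=
    { LinearMap.ker φ with
      lie_mem := by
        intro x v hv
        have hv' : φ v = 0 := hv
        show φ ⁅x, v⁆ = 0
        rw [hφ_apply] at hv' ⊢
        rw [hcomm, hv', lie_zero] }
  let Krg : LieSubmodule ℂ τ V :=
    { LinearMap.range φ with
      lie_mem := by
        intro x v hv
        have hv' : ∃ w, φ w = v := hv
        show ∃ w, φ w = ⁅x, v⁆
        obtain ⟨w, rfl⟩ := hv'
        exact ⟨⁅x, w⁆, by rw [hφ_apply, hφ_apply, hcomm]⟩ }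
  have hker : Kker = ⊥ := by
    rcases eq_bot_or_eq_top Kker with h | h
    · exact h
    · exfalso
      apply hφ_ne
      ext v
      have hv : v ∈ Kker := h ▸ LieSubmodule.mem_top v
      exact hv
  have hrg : Krg = ⊤ := by
    rcases eq_bot_or_eq_top Krg with h | h
    · exfalso
      apply hφ_ne
      ext v
      have hv : φ v ∈ Krg := ⟨v, rfl⟩
      rw [h] at hv
      simpa using hv
    · exact h
  have hinj : Function.Injective φ := by
    rw [← LinearMap.ker_eq_bot]
    have : (Kker : Submodule ℂ V) = ⊥ := by rw [hker]; rfl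
    exact this
  have hsurj : Function.Surjective φ := by
    rw [← LinearMap.range_eq_top]
    have : (Krg : Submodule ℂ V) = ⊤ := by rw [hrg]; rfl
    exact this
  let e := LinearEquiv.ofBijective φ ⟨hinj, hsurj⟩
  refine ⟨(e.symm : V →ₗ[ℂ] V), ?_, ?_, ?_⟩
  · intro r g v
    apply hinj
    show φ (e.symm ⁅T.X r g, v⁆) = φ ⁅T.X r g, e.symm v⁆
    have h1 : φ (e.symm ⁅T.X r g, v⁆) = ⁅T.X r g, v⁆ := e.apply_symm_apply _
    rw [h1, hφ_apply, hcomm]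
    congr 1
    exact (e.apply_symm_apply v).symm
  · intro r i v
    apply hinj
    show φ (e.symm ⁅T.K r i, v⁆) = φ ⁅T.K r i, e.symm v⁆
    have h1 : φ (e.symm ⁅T.K r i, v⁆) = ⁅T.K r i, v⁆ := e.apply_symm_apply _
    rw [h1, hφ_apply, hcomm]
    congr 1
    exact (e.apply_symm_apply v).symm
  · intro v
    constructor
    · show e.symm (φ v) = v
      exact e.symm_apply_apply v
    · show φ (e.symm v) = v
      exact e.apply_symm_apply v

end
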